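/- The Lie superalgebra N_{2,m} (m odd, m ≥ 3) with even part spanned by e₁, e₂, odd part spanned by y₁,…,y_m, and products [y_i,e₁] = -[e₁,y_i] = y_{i+1} (1 ≤ i ≤ m-1), [y_{m+1-i},y_i] = (-1)^{i+1}e₂ (1 ≤ i ≤ (m+1)/2, extended by graded symmetry on odd pairs) is nilpotent of nilindex exactly m+2, i.e., the descending central series N¹ = N, N^{k+1} = [N^k, N] satisfies N^{m+2} = 0 and N^{m+1} ≠ 0. -/

import Mathlib

/-- The lower central series N¹ = N, N^{k+1} = [N^k, N]: here `leibLCS br k`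
corresponds to N^{k+1}. -/
def leibLCS {V : Type*} [AddCommGroup V] [Module ℂ V]
    (br : V →ₗ[ℂ] V →ₗ[ℂ] V) : ℕ → Submodule ℂ V
  | 0 => ⊤
  | k + 1 => Submodule.span ℂ {z | ∃ a ∈ leibLCS br k, ∃ b : V, z = br a b}

/-- The Lie superalgebra N_{2,m} (m odd, m ≥ 3) is nilpotent of nilindex exactly m+2:
N^{m+2} = 0 and N^{m+1} ≠ 0. -/
theorem statement5 {V : Type*} [AddCommGroup V] [Module ℂ V]
    (m : ℕ) (hm : Odd m) (hm3 : 3 ≤ m)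
    (bas : Module.Basis (Fin 2 ⊕ Fin m) ℂ V)
    (eN yN : ℕ → V)
    (heN : ∀ k (h : 1 ≤ k ∧ k ≤ 2), eN k = bas (Sum.inl ⟨k - 1, by omega⟩))
    (heN0 : ∀ k, ¬(1 ≤ k ∧ k ≤ 2) → eN k = 0)
    (hyN : ∀ k (h : 1 ≤ k ∧ k ≤ m), yN k = bas (Sum.inr ⟨k - 1, by omega⟩))
    (hyN0 : ∀ k, ¬(1 ≤ k ∧ k ≤ m) → yN k = 0)
    (br : V →ₗ[ℂ] V →ₗ[ℂ] V)
    (hee : ∀ i j, 1 ≤ i → i ≤ 2 → 1 ≤ j → j ≤ 2 → br (eN i) (eN j) = 0)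
    (hey : ∀ i j, 1 ≤ i → i ≤ 2 → 1 ≤ j → j ≤ m →
      br (eN i) (yN j) = if i = 1 then -yN (j + 1) else 0)
    (hye : ∀ j i, 1 ≤ j → j ≤ m → 1 ≤ i → i ≤ 2 →
      br (yN j) (eN i) = if i = 1 then yN (j + 1) else 0)
    (hyy : ∀ j k, 1 ≤ j → j ≤ m → 1 ≤ k → k ≤ m →
      br (yN j) (yN k) = if j + k = m + 1 then ((-1 : ℂ) ^ (k + 1)) • eN 2 else 0) :
    leibLCS br (m + 1) = ⊥ ∧ leibLCS br m ≠ ⊥ := by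
  -- basis identifications
  have hb1 : ∀ h : (0:ℕ) < 2, bas (Sum.inl ⟨0, h⟩) = eN 1 := fun h =>
    (heN 1 ⟨le_rfl, by omega⟩).symm
  have hb2 : ∀ h : (1:ℕ) < 2, bas (Sum.inl ⟨1, h⟩) = eN 2 := fun h =>
    (heN 2 ⟨by omega, le_rfl⟩).symm
  have hby : ∀ l : Fin m, bas (Sum.inr l) = yN (l.1 + 1) := by
    intro l
    exact (hyN (l.1 + 1) ⟨by omega, by omega⟩).symm
  have htop : ∀ b : V, b ∈ Submodule.span ℂ (Set.range bas) := by
    intro b; rw [bas.span_eq]; trivial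
  -- linearity helpers
  have mapLe : ∀ (s : Set V) (M : Submodule ℂ V) (a b : V),
      a ∈ Submodule.span ℂ s → (∀ x ∈ s, br x b ∈ M) → br a b ∈ M := by
    intro s M a b ha h
    have h1 : br.flip b a ∈ Submodule.map (br.flip b) (Submodule.span ℂ s) :=
      Submodule.mem_map_of_mem ha
    rw [Submodule.map_span] at h1
    exact Submodule.span_le.mpr (by rintro z ⟨x, hx, rfl⟩; exact h x hx) h1
  have mapLeR : ∀ (t : Set V) (M : Submodule ℂ V) (a b : V),
      b ∈ Submodule.span ℂ t → (∀ y ∈ t, br a y ∈ M) → br a b ∈ M := by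
    intro t M a b hb h
    have h1 : br a b ∈ Submodule.map (br a) (Submodule.span ℂ t) :=
      Submodule.mem_map_of_mem hb
    rw [Submodule.map_span] at h1
    exact Submodule.span_le.mpr (by rintro z ⟨y, hy, rfl⟩; exact h y hy) h1
  -- e₂ brackets to zero
  have hE2 : ∀ b : V, br (eN 2) b = 0 := by
    intro b
    have h0 : ∀ y ∈ Set.range bas, br (eN 2) y ∈ (⊥ : Submodule ℂ V) := by
      rintro y ⟨x, rfl⟩
      rcases x with ⟨iv, hiv⟩ | l
      · interval_cases iv
        · rw [hb1 hiv, hee 2 1 (by omega) le_rfl le_rfl (by omega)]; exact zero_mem _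
        · rw [hb2 hiv, hee 2 2 (by omega) le_rfl (by omega) le_rfl]; exact zero_mem _
      · rw [hby l, hey 2 (l.1 + 1) (by omega) le_rfl (by omega) (by omega)]
        simp
    have := mapLeR (Set.range bas) ⊥ (eN 2) b (htop b) h0
    simpa using this
  -- the chain of submodules
  set W : ℕ → Submodule ℂ V := fun n => Submodule.span ℂ ({eN 2} ∪ yN '' Set.Ici n)
    with hWdef
  have Wmono : ∀ {n n' : ℕ}, n ≤ n' → W n' ≤ W n := by
    intro n n' h
    apply Submodule.span_mono
    exact Set.union_subset_union subset_rfl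
      (Set.image_mono (Set.Ici_subset_Ici.mpr h))
  have hyTop : ∀ (j : ℕ) (b : V), br (yN j) b ∈ W (j + 1) := by
    intro j b
    by_cases hj : 1 ≤ j ∧ j ≤ m
    · refine mapLeR (Set.range bas) (W (j + 1)) (yN j) b (htop b) ?_
      rintro y ⟨x, rfl⟩
      rcases x with ⟨iv, hiv⟩ | l
      · interval_cases iv
        · rw [hb1 hiv, hye j 1 hj.1 hj.2 le_rfl (by omega), if_pos rfl]
          exact Submodule.subset_span (Or.inr ⟨j + 1, Set.mem_Ici.mpr le_rfl, rfl⟩)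
        · rw [hb2 hiv, hye j 2 hj.1 hj.2 (by omega) le_rfl, if_neg (by omega)]
          exact zero_mem _
      · rw [hby l, hyy j (l.1 + 1) hj.1 hj.2 (by omega) (by omega)]
        split_ifs
        · exact Submodule.smul_mem _ _ (Submodule.subset_span (Or.inl rfl))
        · exact zero_mem _
    · rw [hyN0 j hj]
      simp
  have hE1mem : ∀ b : V, br (eN 1) b ∈ W 2 := by
    intro b
    refine mapLeR (Set.range bas) (W 2) (eN 1) b (htop b) ?_
    rintro y ⟨x, rfl⟩
    rcases x with ⟨iv, hiv⟩ | l
    · interval_cases iv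
      · rw [hb1 hiv, hee 1 1 le_rfl (by omega) le_rfl (by omega)]; exact zero_mem _
      · rw [hb2 hiv, hee 1 2 le_rfl (by omega) (by omega) le_rfl]; exact zero_mem _
    · rw [hby l, hey 1 (l.1 + 1) le_rfl (by omega) (by omega) (by omega), if_pos rfl]
      exact neg_mem (Submodule.subset_span (Or.inr ⟨l.1 + 1 + 1, Set.mem_Ici.mpr (by omega), rfl⟩))
  have hstep : ∀ (n : ℕ) (a b : V), a ∈ W n → br a b ∈ W (n + 1) := by
    intro n a b ha
    refine mapLe _ _ a b ha ?_
    rintro x (hx | ⟨j, hj, rfl⟩)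
    · rw [Set.mem_singleton_iff] at hx; rw [hx, hE2]; exact zero_mem _
    · exact Wmono (Nat.succ_le_succ hj) (hyTop j b)
  have main : ∀ k, leibLCS br (k + 1) ≤ W (k + 2) := by
    intro k
    induction k with
    | zero =>
      show Submodule.span ℂ {z | ∃ a ∈ leibLCS br 0, ∃ b, z = br a b} ≤ W 2
      rw [Submodule.span_le]
      rintro z ⟨a, _, b, rfl⟩
      refine mapLe (Set.range bas) (W 2) a b (htop a) ?_
      rintro x ⟨t, rfl⟩
      rcases t with ⟨iv, hiv⟩ | l
      · interval_cases iv
        · rw [hb1 hiv]; exact hE1mem b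
        · rw [hb2 hiv, hE2]; exact zero_mem _
      · rw [hby l]; exact Wmono (by omega) (hyTop (l.1 + 1) b)
    | succ k ih =>
      show Submodule.span ℂ {z | ∃ a ∈ leibLCS br (k + 1), ∃ b, z = br a b} ≤ W (k + 3)
      rw [Submodule.span_le]
      rintro z ⟨a, ha, b, rfl⟩
      exact hstep (k + 2) a b (ih ha)
  constructor
  · -- N^{m+2} = 0
    have h1 : leibLCS br m ≤ W (m + 1) := by
      have h := main (m - 1)
      rw [show m - 1 + 1 = m by omega, show m - 1 + 2 = m + 1 by omega] at h
      exact h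
    refine le_bot_iff.mp ?_
    show Submodule.span ℂ {z | ∃ a ∈ leibLCS br m, ∃ b, z = br a b} ≤ ⊥
    rw [Submodule.span_le]
    rintro z ⟨a, ha, b, rfl⟩
    have haW := h1 ha
    refine mapLe _ _ a b haW ?_
    rintro x (hx | ⟨j, hj, rfl⟩)
    · rw [Set.mem_singleton_iff] at hx; rw [hx, hE2]; exact zero_mem _
    · rw [hyN0 j (by simp only [Set.mem_Ici] at hj; omega)]
      simp
  · -- N^{m+1} ≠ 0
    have hyMem : ∀ k, k + 1 ≤ m → yN (k + 1) ∈ leibLCS br k := by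
      intro k
      induction k with
      | zero => intro _; exact Submodule.mem_top
      | succ k ih =>
        intro hk
        show yN (k + 2) ∈ Submodule.span ℂ {z | ∃ a ∈ leibLCS br k, ∃ b, z = br a b}
        apply Submodule.subset_span
        refine ⟨yN (k + 1), ih (by omega), eN 1, ?_⟩
        rw [hye (k + 1) 1 (by omega) (by omega) le_rfl (by omega), if_pos rfl]
    have hym : yN m ∈ leibLCS br (m - 1) := by
      have h := hyMem (m - 1) (by omega)
      rwa [show m - 1 + 1 = m by omega] at h
    have he2 : eN 2 ∈ leibLCS br m := by
      rw [show m = (m - 1) + 1 by omega]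
      show eN 2 ∈ Submodule.span ℂ {z | ∃ a ∈ leibLCS br (m - 1), ∃ b, z = br a b}
      apply Submodule.subset_span
      refine ⟨yN m, hym, yN 1, ?_⟩
      rw [hyy m 1 (by omega) le_rfl le_rfl (by omega), if_pos rfl]
      norm_num
    intro hbot
    rw [hbot] at he2
    have h0 : eN 2 = 0 := (Submodule.mem_bot ℂ).mp he2
    have hne : eN 2 ≠ 0 := by
      rw [heN 2 ⟨by omega, le_rfl⟩]; exact bas.ne_zero _
    exact hne h0
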